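/- arXiv:1703.08021 — 4 statements merged into one kernel-verified Lean document; each statement's English description precedes it below -/
import Mathlib

section
/- Let 0 < δ̂ ≤ δ < 1 and 0 < c_φ ≤ C_φ, and let φ : ℝ → ℝ be differentiable with c_φ·max{1,|p|}^{−1−δ} ≤ φ'(p) ≤ C_φ·max{1,|p|}^{−1−δ̂} for all p ∈ ℝ. With Φ(p) = ∫₀^p φ(τ)dτ and V(p) = pφ(p) − Φ(p), one has for every p ∈ ℝ: (c_φ/(1−δ))·(|p|^{1−δ} − (1+δ)/2) ≤ V(p) ≤ C_φ·|p|. -/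
open Set

private lemma mono_aux {F F' : ℝ → ℝ} {D : Set ℝ} (hD : Convex ℝ D)
    (hF : ∀ x ∈ D, HasDerivAt F (F' x) x) (h0 : ∀ x ∈ interior D, 0 ≤ F' x) :
    MonotoneOn F D :=
  monotoneOn_of_deriv_nonneg hD
    (fun x hx => (hF x hx).continuousAt.continuousWithinAt)
    (fun x hx => ((hF x (interior_subset hx)).differentiableAt).differentiableWithinAt)
    (fun x hx => by rw [(hF x (interior_subset hx)).deriv]; exact h0 x hx)

private lemma lower_aux (δ cφ : ℝ) (hδ0 : 0 < δ) (hδ1 : δ < 1) (hc : 0 < cφ)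
    (U g : ℝ → ℝ) (hU0 : U 0 = 0) (hU : ∀ p, HasDerivAt U (g p) p)
    (hg1 : ∀ p, 0 ≤ p → p ≤ 1 → cφ * p ≤ g p)
    (hg2 : ∀ p, 1 ≤ p → cφ * p ^ (-δ) ≤ g p) :
    ∀ p, 0 ≤ p → cφ / (1 - δ) * (p ^ (1 - δ) - (1 + δ) / 2) ≤ U p := by
  have h1δ : (0:ℝ) < 1 - δ := by linarith
  -- Step 1: quadratic lower bound on [0,1]
  have step1 : ∀ p ∈ Icc (0:ℝ) 1, cφ / 2 * (p * p) ≤ U p := by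
    have hmono : MonotoneOn (fun x => U x - cφ / 2 * (x * x)) (Icc (0:ℝ) 1) := by
      apply mono_aux (convex_Icc 0 1)
        (F' := fun x => g x - cφ / 2 * (1 * x + x * 1))
      · intro x _
        exact (hU x).sub (((hasDerivAt_id x).mul (hasDerivAt_id x)).const_mul (cφ / 2))
      · intro x hx
        rw [interior_Icc] at hx
        have := hg1 x hx.1.le hx.2.le
        nlinarith
    intro p hp
    have := hmono (left_mem_Icc.mpr zero_le_one) hp hp.1
    simp only [hU0] at this
    nlinarith
  -- Step 2: rpow lower bound on [1, ∞)
  have step2 : ∀ p, 1 ≤ p → cφ / (1 - δ) * p ^ (1 - δ) + (cφ / 2 - cφ / (1 - δ)) ≤ U p := by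
    have hmono : MonotoneOn (fun x => U x - cφ / (1 - δ) * x ^ (1 - δ)) (Ici (1:ℝ)) := by
      apply mono_aux (convex_Ici 1)
        (F' := fun x => g x - cφ / (1 - δ) * ((1 - δ) * x ^ (1 - δ - 1)))
      · intro x hx
        have hx0 : x ≠ 0 := by
          have : (1:ℝ) ≤ x := hx
          linarith
        exact (hU x).sub ((Real.hasDerivAt_rpow_const (Or.inl hx0)).const_mul (cφ / (1 - δ)))
      · intro x hx
        rw [interior_Ici] at hx
        have hx1 : (1:ℝ) ≤ x := hx.le
        have h2 := hg2 x hx1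
        have he : (1 - δ - 1 : ℝ) = -δ := by ring
        rw [he]
        have : cφ / (1 - δ) * ((1 - δ) * x ^ (-δ)) = cφ * x ^ (-δ) := by
          field_simp
        rw [this]
        linarith
    intro p hp
    have h1 := hmono (self_mem_Ici) hp hp
    have hU1 : cφ / 2 ≤ U 1 := by
      have := step1 1 (right_mem_Icc.mpr zero_le_one)
      linarith
    simp only at h1
    rw [Real.one_rpow] at h1
    linarith
  intro p hp
  rcases le_or_gt p 1 with hle | hgt
  · -- Young's inequality:  p^(1-δ) ≤ (1-δ)/2 * p² + (1+δ)/2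
    have hyoung : p ^ (1 - δ) ≤ (1 - δ) / 2 * (p * p) + (1 + δ) / 2 := by
      have h := Real.geom_mean_le_arith_mean2_weighted
        (w₁ := (1 - δ) / 2) (w₂ := (1 + δ) / 2) (p₁ := p * p) (p₂ := 1)
        (by linarith) (by linarith) (mul_self_nonneg p) zero_le_one (by ring)
      rw [Real.one_rpow, mul_one, mul_one] at h
      have hpp : (p * p) ^ ((1 - δ) / 2) = p ^ (1 - δ) := by
        have h2 : p * p = p ^ (2:ℝ) := by
          rw [show (2:ℝ) = ((2:ℕ):ℝ) by norm_num, Real.rpow_natCast]; ring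
        rw [h2, ← Real.rpow_mul hp]
        congr 1
        ring
      rwa [hpp] at h
    have hq := step1 p ⟨hp, hle⟩
    have key : cφ / (1 - δ) * (p ^ (1 - δ) - (1 + δ) / 2) ≤ cφ / 2 * (p * p) := by
      have hA : p ^ (1 - δ) - (1 + δ) / 2 ≤ (1 - δ) / 2 * (p * p) := by linarith
      have h1 : cφ / (1 - δ) * (p ^ (1 - δ) - (1 + δ) / 2) ≤
          cφ / (1 - δ) * ((1 - δ) / 2 * (p * p)) :=
        mul_le_mul_of_nonneg_left hA (by positivity)
      have h2 : cφ / (1 - δ) * ((1 - δ) / 2 * (p * p)) = cφ / 2 * (p * p) := by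
        field_simp
      linarith
    linarith
  · have h2 := step2 p hgt.le
    have hid : cφ / 2 - cφ / (1 - δ) = -(cφ / (1 - δ) * ((1 + δ) / 2)) := by
      field_simp; ring
    have : cφ / (1 - δ) * (p ^ (1 - δ) - (1 + δ) / 2)
        = cφ / (1 - δ) * p ^ (1 - δ) - cφ / (1 - δ) * ((1 + δ) / 2) := by ring
    linarith

private lemma upper_aux (Cφ : ℝ) (U g : ℝ → ℝ) (hU0 : U 0 = 0)
    (hU : ∀ p, HasDerivAt U (g p) p) (hg : ∀ p, 0 ≤ p → g p ≤ Cφ) :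
    ∀ p, 0 ≤ p → U p ≤ Cφ * p := by
  have hmono : MonotoneOn (fun x => Cφ * x - U x) (Ici (0:ℝ)) := by
    apply mono_aux (convex_Ici 0) (F' := fun x => Cφ * 1 - g x)
    · intro x _
      exact ((hasDerivAt_id x).const_mul Cφ).sub (hU x)
    · intro x hx
      rw [interior_Ici] at hx
      have := hg x hx.le
      linarith
  intro p hp
  have := hmono self_mem_Ici hp hp
  simp only [mul_zero, hU0, sub_zero] at this
  linarith

/-- Two-sided bound on the potential V(p) = pφ(p) − Φ(p) under the structural
assumption c_φ max{1,|p|}^{−1−δ} ≤ φ'(p) ≤ C_φ max{1,|p|}^{−1−δ̂}. -/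
theorem stmt5 (δh δ cφ Cφ : ℝ) (h1 : 0 < δh) (h2 : δh ≤ δ) (h3 : δ < 1)
    (h4 : 0 < cφ) (h5 : cφ ≤ Cφ)
    (φ : ℝ → ℝ) (hφ : Differentiable ℝ φ)
    (hφ' : ∀ p : ℝ, cφ * (max 1 |p|) ^ (-(1 + δ)) ≤ deriv φ p ∧
        deriv φ p ≤ Cφ * (max 1 |p|) ^ (-(1 + δh)))
    (Φ V : ℝ → ℝ)
    (hΦ : ∀ p, Φ p = ∫ τ in (0:ℝ)..p, φ τ)
    (hV : ∀ p, V p = p * φ p - Φ p) :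
    ∀ p : ℝ, cφ / (1 - δ) * (|p| ^ (1 - δ) - (1 + δ) / 2) ≤ V p ∧
      V p ≤ Cφ * |p| := by
  have hδ0 : 0 < δ := lt_of_lt_of_le h1 h2
  have hC : 0 < Cφ := lt_of_lt_of_le h4 h5
  have hcont : Continuous φ := hφ.continuous
  -- Φ' = φ
  have hΦd : ∀ p, HasDerivAt Φ (φ p) p := by
    intro p
    have hfun : Φ = fun u => ∫ τ in (0:ℝ)..u, φ τ := funext hΦ
    rw [hfun]
    exact intervalIntegral.integral_hasDerivAt_right
      (hcont.intervalIntegrable 0 p)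
      (hcont.aestronglyMeasurable.stronglyMeasurableAtFilter)
      hcont.continuousAt
  -- V' p = p * φ' p
  have hVd : ∀ p, HasDerivAt V (p * deriv φ p) p := by
    intro p
    have hfun : V = fun q => q * φ q - Φ q := funext hV
    rw [hfun]
    have h := ((hasDerivAt_id p).mul ((hφ p).hasDerivAt)).sub (hΦd p)
    refine h.congr_deriv ?_
    simp only [id_eq]
    ring
  have hV0 : V 0 = 0 := by
    rw [hV 0, hΦ 0, intervalIntegral.integral_same]; ring
  -- key bound: a * (max 1 a)^(-(1+e)) ≤ 1 for a ≥ 0, e ≥ 0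
  have keyb : ∀ a e : ℝ, 0 ≤ a → 0 ≤ e → a * (max 1 a) ^ (-(1 + e)) ≤ 1 := by
    intro a e ha he
    set M : ℝ := max 1 a with hM
    have hM1 : (1:ℝ) ≤ M := le_max_left _ _
    have hM0 : (0:ℝ) < M := lt_of_lt_of_le one_pos hM1
    have haM : a ≤ M := le_max_right _ _
    have hexp : M ^ (-(1 + e)) ≤ M ^ (-1 : ℝ) :=
      Real.rpow_le_rpow_of_exponent_le hM1 (by linarith)
    rw [Real.rpow_neg_one] at hexp
    calc a * M ^ (-(1 + e)) ≤ a * M⁻¹ := mul_le_mul_of_nonneg_left hexp ha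
      _ ≤ 1 := by
          rw [← div_eq_mul_inv]
          exact (div_le_one hM0).mpr haM
  -- bounds for deriv φ at ±p for p ≥ 0
  have hupper : ∀ s : ℝ, ∀ p, 0 ≤ p → |s * p| = p → p * deriv φ (s * p) ≤ Cφ := by
    intro s p hp habs
    have hd := (hφ' (s * p)).2
    rw [habs] at hd
    have h1' : p * deriv φ (s * p) ≤ p * (Cφ * (max 1 p) ^ (-(1 + δh))) :=
      mul_le_mul_of_nonneg_left hd hp
    have h2' : p * (Cφ * (max 1 p) ^ (-(1 + δh))) = Cφ * (p * (max 1 p) ^ (-(1 + δh))) := by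
      ring
    have h3' := keyb p δh hp h1.le
    calc p * deriv φ (s * p) ≤ Cφ * (p * (max 1 p) ^ (-(1 + δh))) := by rw [← h2']; exact h1'
      _ ≤ Cφ * 1 := mul_le_mul_of_nonneg_left h3' hC.le
      _ = Cφ := mul_one _
  have hlow1 : ∀ s : ℝ, ∀ p, 0 ≤ p → p ≤ 1 → |s * p| = p → cφ * p ≤ p * deriv φ (s * p) := by
    intro s p hp hp1 habs
    have hd := (hφ' (s * p)).1
    rw [habs, max_eq_left hp1, Real.one_rpow, mul_one] at hd
    calc cφ * p = p * cφ := by ring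
      _ ≤ p * deriv φ (s * p) := mul_le_mul_of_nonneg_left hd hp
  have hlow2 : ∀ s : ℝ, ∀ p, 1 ≤ p → |s * p| = p → cφ * p ^ (-δ) ≤ p * deriv φ (s * p) := by
    intro s p hp habs
    have hp0 : (0:ℝ) < p := lt_of_lt_of_le one_pos hp
    have hd := (hφ' (s * p)).1
    rw [habs, max_eq_right hp] at hd
    have key : p * (cφ * p ^ (-(1 + δ))) = cφ * p ^ (-δ) := by
      have : p * p ^ (-(1 + δ)) = p ^ (-δ : ℝ) := by
        rw [show (-δ : ℝ) = 1 + (-(1 + δ)) by ring, Real.rpow_add hp0, Real.rpow_one]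
      calc p * (cφ * p ^ (-(1 + δ))) = cφ * (p * p ^ (-(1 + δ))) := by ring
        _ = cφ * p ^ (-δ) := by rw [this]
    calc cφ * p ^ (-δ) = p * (cφ * p ^ (-(1 + δ))) := key.symm
      _ ≤ p * deriv φ (s * p) := mul_le_mul_of_nonneg_left hd hp0.le
  -- the reflected function
  have hWd : ∀ p : ℝ, HasDerivAt (fun x => V (-x)) (p * deriv φ (-p)) p := by
    intro p
    have h := (hVd (-p)).comp p (hasDerivAt_neg p)
    refine h.congr_deriv ?_
    ring
  have hW0 : V (-(0:ℝ)) = 0 := by rw [neg_zero, hV0]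
  -- lower/upper bounds for V on nonneg arguments
  have hlowV : ∀ p, 0 ≤ p → cφ / (1 - δ) * (p ^ (1 - δ) - (1 + δ) / 2) ≤ V p := by
    apply lower_aux δ cφ hδ0 h3 h4 V (fun p => p * deriv φ p) hV0 hVd
    · intro p hp hp1
      have := hlow1 1 p hp hp1 (by rw [one_mul, abs_of_nonneg hp])
      rwa [one_mul] at this
    · intro p hp
      have := hlow2 1 p hp (by rw [one_mul, abs_of_nonneg (le_trans zero_le_one hp)])
      rwa [one_mul] at this
  have hupV : ∀ p, 0 ≤ p → V p ≤ Cφ * p := by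
    apply upper_aux Cφ V (fun p => p * deriv φ p) hV0 hVd
    intro p hp
    have := hupper 1 p hp (by rw [one_mul, abs_of_nonneg hp])
    rwa [one_mul] at this
  have hlowW : ∀ p, 0 ≤ p → cφ / (1 - δ) * (p ^ (1 - δ) - (1 + δ) / 2) ≤ V (-p) := by
    apply lower_aux δ cφ hδ0 h3 h4 (fun x => V (-x)) (fun p => p * deriv φ (-p)) hW0 hWd
    · intro p hp hp1
      have := hlow1 (-1) p hp hp1 (by rw [neg_one_mul, abs_neg, abs_of_nonneg hp])
      rwa [neg_one_mul] at this
    · intro p hp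
      have := hlow2 (-1) p hp
        (by rw [neg_one_mul, abs_neg, abs_of_nonneg (le_trans zero_le_one hp)])
      rwa [neg_one_mul] at this
  have hupW : ∀ p, 0 ≤ p → V (-p) ≤ Cφ * p := by
    apply upper_aux Cφ (fun x => V (-x)) (fun p => p * deriv φ (-p)) hW0 hWd
    intro p hp
    have := hupper (-1) p hp (by rw [neg_one_mul, abs_neg, abs_of_nonneg hp])
    rwa [neg_one_mul] at this
  intro p
  rcases le_or_gt 0 p with hp | hp
  · rw [abs_of_nonneg hp]
    exact ⟨hlowV p hp, hupV p hp⟩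
  · rw [abs_of_neg hp]
    have hp' : 0 ≤ -p := by linarith
    constructor
    · have := hlowW (-p) hp'
      rwa [neg_neg] at this
    · have := hupW (-p) hp'
      rwa [neg_neg] at this
end

section
/- Let 0 < δ < 1, c_φ > 0, k ≥ 0, and let φ : ℝ → ℝ be differentiable with φ'(τ) ≥ c_φ·max{1,|τ|}^{−1−δ} for all τ ∈ ℝ. Define V_b(p) := ∫₀^p φ'(τ)·τ·|τ|^{2k} dτ. Then for every p ∈ ℝ: V_b(p) ≥ (c_φ/(2k+1−δ))·(|p|^{2k+1−δ} − (1+δ)/(2k+2)). -/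
open MeasureTheory intervalIntegral Set

private lemma g_cont (cφ δ k : ℝ) (hk : 0 ≤ k) :
    Continuous (fun τ : ℝ => cφ * (max 1 |τ|) ^ (-(1 + δ)) * (τ * |τ| ^ (2 * k))) := by
  have h1 : Continuous fun τ : ℝ => (max 1 |τ|) ^ (-(1 + δ)) := by
    apply Continuous.rpow_const (continuous_const.max continuous_abs)
    intro x
    left
    have : (1 : ℝ) ≤ max 1 |x| := le_max_left _ _
    linarith
  have h2 : Continuous fun τ : ℝ => |τ| ^ (2 * k) := by
    apply Continuous.rpow_const (by continuity)
    intro x; right; positivity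
  continuity

private lemma g_int_low (cφ δ k : ℝ) (hδ1 : 0 < δ) (hk : 0 ≤ k) (q : ℝ)
    (hq0 : 0 ≤ q) (hq1 : q ≤ 1) :
    (∫ τ in (0:ℝ)..q, cφ * (max 1 |τ|) ^ (-(1 + δ)) * (τ * |τ| ^ (2 * k)))
      = cφ * q ^ (2 * k + 2) / (2 * k + 2) := by
  have heq : Set.EqOn (fun τ : ℝ => cφ * (max 1 |τ|) ^ (-(1 + δ)) * (τ * |τ| ^ (2 * k)))
      (fun τ : ℝ => cφ * τ ^ (2 * k + 1)) (Set.uIcc 0 q) := by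
    intro τ hτ
    rw [Set.uIcc_of_le hq0] at hτ
    obtain ⟨hτ0, hτq⟩ := hτ
    have habs : |τ| = τ := abs_of_nonneg hτ0
    have hmax : max 1 |τ| = 1 := max_eq_left (by rw [habs]; linarith)
    simp only [hmax, Real.one_rpow, mul_one]
    rcases eq_or_lt_of_le hτ0 with h | h
    · rw [← h]
      rw [Real.zero_rpow (by positivity)]
      simp
    · rw [habs, Real.rpow_add h, Real.rpow_one]
      ring
  rw [intervalIntegral.integral_congr heq, intervalIntegral.integral_const_mul,
    integral_rpow (Or.inl (by linarith)), Real.zero_rpow (by positivity)]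
  rw [show 2 * k + 1 + 1 = 2 * k + 2 by ring]
  ring

private lemma g_int_high (cφ δ k : ℝ) (hδ1 : 0 < δ) (hδ2 : δ < 1) (hk : 0 ≤ k) (q : ℝ)
    (hq1 : 1 ≤ q) :
    (∫ τ in (1:ℝ)..q, cφ * (max 1 |τ|) ^ (-(1 + δ)) * (τ * |τ| ^ (2 * k)))
      = cφ * (q ^ (2 * k + 1 - δ) - 1) / (2 * k + 1 - δ) := by
  have heq : Set.EqOn (fun τ : ℝ => cφ * (max 1 |τ|) ^ (-(1 + δ)) * (τ * |τ| ^ (2 * k)))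
      (fun τ : ℝ => cφ * τ ^ (2 * k - δ)) (Set.uIcc 1 q) := by
    intro τ hτ
    rw [Set.uIcc_of_le hq1] at hτ
    obtain ⟨hτ1, hτq⟩ := hτ
    have hτ0 : (0:ℝ) < τ := by linarith
    have habs : |τ| = τ := abs_of_nonneg hτ0.le
    show cφ * (max 1 |τ|) ^ (-(1 + δ)) * (τ * |τ| ^ (2 * k)) = cφ * τ ^ (2 * k - δ)
    rw [habs, max_eq_right hτ1]
    rw [show 2 * k - δ = -(1 + δ) + (1 + 2 * k) by ring, Real.rpow_add hτ0,
      Real.rpow_add hτ0, Real.rpow_one]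
    ring
  rw [intervalIntegral.integral_congr heq, intervalIntegral.integral_const_mul,
    integral_rpow (Or.inl (by linarith)), Real.one_rpow]
  rw [show 2 * k - δ + 1 = 2 * k + 1 - δ by ring]
  ring

/-- Lower bound for the weighted potential V_b(p) = ∫₀^p φ'(τ) τ |τ|^{2k} dτ. -/
theorem stmt6 (δ cφ k : ℝ) (hδ1 : 0 < δ) (hδ2 : δ < 1) (hcφ : 0 < cφ) (hk : 0 ≤ k)
    (φ : ℝ → ℝ) (hφ : Differentiable ℝ φ)
    (hφ' : ∀ τ : ℝ, cφ * (max 1 |τ|) ^ (-(1 + δ)) ≤ deriv φ τ)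
    (Vb : ℝ → ℝ)
    (hVb : ∀ p, Vb p = ∫ τ in (0:ℝ)..p, deriv φ τ * τ * |τ| ^ (2 * k)) :
    ∀ p : ℝ,
      cφ / (2 * k + 1 - δ) * (|p| ^ (2 * k + 1 - δ) - (1 + δ) / (2 * k + 2))
        ≤ Vb p := by
  set g : ℝ → ℝ := fun τ => cφ * (max 1 |τ|) ^ (-(1 + δ)) * (τ * |τ| ^ (2 * k)) with hg
  set f : ℝ → ℝ := fun τ => deriv φ τ * τ * |τ| ^ (2 * k) with hf
  have he : 0 < 2 * k + 1 - δ := by linarith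
  have hm : (0:ℝ) < 2 * k + 2 := by linarith
  have hgc : Continuous g := g_cont cφ δ k hk
  have hφ'nonneg : ∀ τ, 0 ≤ deriv φ τ := fun τ => le_trans (by positivity) (hφ' τ)
  -- integrability of f
  have hfint : ∀ a b : ℝ, IntervalIntegrable f volume a b := by
    intro a b
    have h1 : IntervalIntegrable (deriv φ) volume a b := by
      apply intervalIntegrable_deriv_of_nonneg (g := φ)
      · exact hφ.continuous.continuousOn
      · intro x _; exact (hφ x).hasDerivAt
      · intro x _; exact hφ'nonneg x
    have h2 := h1.mul_continuousOn (g := fun τ : ℝ => τ * |τ| ^ (2 * k))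
      (by
        apply Continuous.continuousOn
        apply continuous_id.mul
        apply Continuous.rpow_const (by continuity)
        intro x; right; positivity)
    simp only [hf, mul_assoc]
    exact h2
  -- pointwise comparison
  have hpw_pos : ∀ τ : ℝ, 0 ≤ τ → g τ ≤ f τ := by
    intro τ hτ
    have hw : 0 ≤ τ * |τ| ^ (2 * k) := by positivity
    have := mul_le_mul_of_nonneg_right (hφ' τ) hw
    simpa [hg, hf, mul_assoc] using this
  have hpw_neg : ∀ τ : ℝ, τ ≤ 0 → f τ ≤ g τ := by
    intro τ hτ
    have hw : τ * |τ| ^ (2 * k) ≤ 0 :=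
      mul_nonpos_of_nonpos_of_nonneg hτ (by positivity)
    have := mul_le_mul_of_nonpos_right (hφ' τ) hw
    simpa [hg, hf, mul_assoc] using this
  -- key1 : ∫ g ≤ Vb p
  have key1 : ∀ p : ℝ, (∫ τ in (0:ℝ)..p, g τ) ≤ Vb p := by
    intro p
    rw [hVb p]
    show (∫ τ in (0:ℝ)..p, g τ) ≤ ∫ τ in (0:ℝ)..p, f τ
    rcases le_total 0 p with h | h
    · exact intervalIntegral.integral_mono_on h (hgc.intervalIntegrable 0 p) (hfint 0 p)
        (fun x hx => hpw_pos x hx.1)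
    · rw [intervalIntegral.integral_symm, intervalIntegral.integral_symm p 0]
      have : (∫ τ in p..(0:ℝ), f τ) ≤ ∫ τ in p..(0:ℝ), g τ :=
        intervalIntegral.integral_mono_on h (hfint p 0) (hgc.intervalIntegrable p 0)
          (fun x hx => hpw_neg x hx.2)
      linarith
  -- oddness reduction
  have godd : ∀ p : ℝ, (∫ τ in (0:ℝ)..p, g τ) = ∫ τ in (0:ℝ)..|p|, g τ := by
    intro p
    rcases le_total 0 p with h | h
    · rw [abs_of_nonneg h]
    · rw [abs_of_nonpos h]
      have hneg : ∀ x : ℝ, g (-x) = -g x := by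
        intro x
        simp only [hg, abs_neg]
        ring
      have := intervalIntegral.integral_comp_neg (a := (0:ℝ)) (b := -p) (f := g)
      rw [neg_neg, neg_zero] at this
      calc (∫ τ in (0:ℝ)..p, g τ) = -(∫ τ in p..(0:ℝ), g τ) := by
            rw [intervalIntegral.integral_symm]
        _ = -(∫ τ in (0:ℝ)..(-p), g (-τ)) := by rw [this]
        _ = ∫ τ in (0:ℝ)..(-p), g τ := by
            rw [intervalIntegral.integral_congr (fun x _ => hneg x),
              intervalIntegral.integral_neg, neg_neg]
  -- key2 : lower bound for ∫₀^q g when q ≥ 0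
  have key2 : ∀ q : ℝ, 0 ≤ q →
      cφ / (2 * k + 1 - δ) * (q ^ (2 * k + 1 - δ) - (1 + δ) / (2 * k + 2))
        ≤ ∫ τ in (0:ℝ)..q, g τ := by
    intro q hq
    rcases le_total q 1 with hq1 | hq1
    · rw [hg, g_int_low cφ δ k hδ1 hk q hq hq1]
      -- Young's inequality: q^e ≤ e/m * q^m + (1+δ)/m
      have hrw : q ^ (2 * k + 1 - δ)
          = (q ^ (2 * k + 2)) ^ ((2 * k + 1 - δ) / (2 * k + 2)) := by
        rw [← Real.rpow_mul hq]
        congr 1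
        field_simp
      have hyoung : q ^ (2 * k + 1 - δ)
          ≤ (2 * k + 1 - δ) / (2 * k + 2) * q ^ (2 * k + 2) + (1 + δ) / (2 * k + 2) := by
        rw [hrw]
        have := Real.geom_mean_le_arith_mean2_weighted
          (w₁ := (2 * k + 1 - δ) / (2 * k + 2)) (w₂ := (1 + δ) / (2 * k + 2))
          (p₁ := q ^ (2 * k + 2)) (p₂ := 1)
          (by positivity) (by positivity) (by positivity) zero_le_one
          (by field_simp; ring)
        simpa using this
      calc cφ / (2 * k + 1 - δ) * (q ^ (2 * k + 1 - δ) - (1 + δ) / (2 * k + 2))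
          ≤ cφ / (2 * k + 1 - δ) * ((2 * k + 1 - δ) / (2 * k + 2) * q ^ (2 * k + 2)) := by
            apply mul_le_mul_of_nonneg_left (by linarith) (by positivity)
        _ = cφ * q ^ (2 * k + 2) / (2 * k + 2) := by
            field_simp
    · have hsplit : (∫ τ in (0:ℝ)..q, g τ)
          = (∫ τ in (0:ℝ)..1, g τ) + ∫ τ in (1:ℝ)..q, g τ :=
        (intervalIntegral.integral_add_adjacent_intervals
          (hgc.intervalIntegrable 0 1) (hgc.intervalIntegrable 1 q)).symm
      rw [hsplit, hg, g_int_low cφ δ k hδ1 hk 1 zero_le_one le_rfl,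
        g_int_high cφ δ k hδ1 hδ2 hk q hq1, Real.one_rpow]
      have : cφ / (2 * k + 1 - δ) * (q ^ (2 * k + 1 - δ) - (1 + δ) / (2 * k + 2))
          = cφ * 1 / (2 * k + 2) + cφ * (q ^ (2 * k + 1 - δ) - 1) / (2 * k + 1 - δ) := by
        field_simp
        ring
      linarith
  intro p
  calc cφ / (2 * k + 1 - δ) * (|p| ^ (2 * k + 1 - δ) - (1 + δ) / (2 * k + 2))
      ≤ ∫ τ in (0:ℝ)..|p|, g τ := key2 |p| (abs_nonneg p)
    _ = ∫ τ in (0:ℝ)..p, g τ := (godd p).symm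
    _ ≤ Vb p := key1 p
end

section
/- Let φ : ℝ → ℝ be differentiable with φ'(p) > 0 for every p, Φ(p) = ∫₀^p φ(τ)dτ, and V(p) = pφ(p) − Φ(p). Let b : ℝ → ℝ be differentiable, even, with b(τ) ≥ 0 for all τ and b'(τ) ≥ 0 for τ ≥ 0. Define Ψ(p) := φ(p)·p·b(p) − ∫₀^p φ'(τ)·τ·b(τ)dτ − Φ(p)·b(p). Then for every p ∈ ℝ: Ψ(p) = ∫₀^p V(τ)b'(τ)dτ, and 0 ≤ Ψ(p) ≤ V(p)·b(p). -/
open MeasureTheory Set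

/-- The remainder Ψ(p) = φ(p)p b(p) − ∫₀^p φ'(τ)τ b(τ)dτ − Φ(p)b(p) satisfies
Ψ(p) = ∫₀^p V(τ) b'(τ) dτ and 0 ≤ Ψ(p) ≤ V(p) b(p). -/
theorem stmt7 (φ : ℝ → ℝ) (hφ : Differentiable ℝ φ) (hφ' : ∀ p, 0 < deriv φ p)
    (Φ V : ℝ → ℝ)
    (hΦ : ∀ p, Φ p = ∫ τ in (0:ℝ)..p, φ τ)
    (hV : ∀ p, V p = p * φ p - Φ p)
    (b : ℝ → ℝ) (hb : Differentiable ℝ b) (hbeven : ∀ τ, b (-τ) = b τ)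
    (hbnn : ∀ τ, 0 ≤ b τ) (hb' : ∀ τ : ℝ, 0 ≤ τ → 0 ≤ deriv b τ)
    (Ψ : ℝ → ℝ)
    (hΨ : ∀ p, Ψ p = φ p * p * b p - (∫ τ in (0:ℝ)..p, deriv φ τ * τ * b τ)
        - Φ p * b p) :
    ∀ p : ℝ, Ψ p = (∫ τ in (0:ℝ)..p, V τ * deriv b τ) ∧
      0 ≤ Ψ p ∧ Ψ p ≤ V p * b p := by
  have hφc : Continuous φ := hφ.continuous
  have hΦd : ∀ x : ℝ, HasDerivAt Φ (φ x) x := by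
    intro x
    have h1 : HasDerivAt (fun u => ∫ τ in (0:ℝ)..u, φ τ) (φ x) x :=
      intervalIntegral.integral_hasDerivAt_right (hφc.intervalIntegrable 0 x)
        (hφc.stronglyMeasurableAtFilter volume (nhds x)) hφc.continuousAt
    have h2 : Φ = fun u => ∫ τ in (0:ℝ)..u, φ τ := funext hΦ
    rw [h2]; exact h1
  have hVd : ∀ x : ℝ, HasDerivAt V (x * deriv φ x) x := by
    intro x
    have h1 : HasDerivAt (fun u => u * φ u - Φ u) (1 * φ x + x * deriv φ x - φ x) x :=
      ((hasDerivAt_id x).mul (hφ x).hasDerivAt).sub (hΦd x)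
    have h2 : V = fun u => u * φ u - Φ u := funext hV
    rw [h2]; convert h1 using 1; ring
  have hΦ0 : Φ 0 = 0 := by rw [hΦ]; simp
  have hV0 : V 0 = 0 := by rw [hV]; simp [hΦ0]
  -- deriv b is odd
  have hbodd : ∀ τ : ℝ, deriv b τ = -deriv b (-τ) := by
    intro τ
    have h1 : HasDerivAt (fun u : ℝ => b (-u)) (-deriv b (-τ)) τ := by
      have := ((hb (-τ)).hasDerivAt).comp τ (hasDerivAt_neg τ)
      simpa [mul_comm, Function.comp_def] using this
    have h2 : (fun u : ℝ => b (-u)) = b := funext hbeven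
    rw [h2] at h1
    rw [h1.deriv]
  have hb'neg : ∀ τ : ℝ, τ ≤ 0 → deriv b τ ≤ 0 := by
    intro τ hτ
    rw [hbodd τ]
    simpa using hb' (-τ) (by linarith)
  -- V is nonnegative
  have hVdiff : Differentiable ℝ V := fun x => (hVd x).differentiableAt
  have hVderiv : ∀ x, deriv V x = x * deriv φ x := fun x => (hVd x).deriv
  have hVmono : MonotoneOn V (Ici 0) := by
    apply monotoneOn_of_deriv_nonneg (convex_Ici 0) hVdiff.continuous.continuousOn
      hVdiff.differentiableOn
    intro x hx
    rw [interior_Ici] at hx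
    rw [hVderiv]
    exact mul_nonneg (le_of_lt hx) (hφ' x).le
  have hVanti : AntitoneOn V (Iic 0) := by
    apply antitoneOn_of_deriv_nonpos (convex_Iic 0) hVdiff.continuous.continuousOn
      hVdiff.differentiableOn
    intro x hx
    rw [interior_Iic] at hx
    rw [hVderiv]
    exact mul_nonpos_of_nonpos_of_nonneg hx.le (hφ' x).le
  have hVnn : ∀ τ : ℝ, 0 ≤ V τ := by
    intro τ
    rcases le_total 0 τ with h | h
    · have := hVmono self_mem_Ici (mem_Ici.2 h) h
      rwa [hV0] at this
    · have := hVanti (mem_Iic.2 h) self_mem_Iic h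
      rwa [hV0] at this
  -- b is monotone on [0, ∞)
  have hbmono : MonotoneOn b (Ici 0) := by
    apply monotoneOn_of_deriv_nonneg (convex_Ici 0) hb.continuous.continuousOn
      hb.differentiableOn
    intro x hx
    rw [interior_Ici] at hx
    exact hb' x hx.le
  intro p
  set g : ℝ → ℝ := fun τ => deriv φ τ * τ * b τ with hgdef
  set h2 : ℝ → ℝ := fun τ => V τ * deriv b τ with hh2def
  have hWd : ∀ x : ℝ, HasDerivAt (fun u => V u * b u) (g x + h2 x) x := by
    intro x
    have h : HasDerivAt (fun u => V u * b u) (x * deriv φ x * b x + V x * deriv b x) x :=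
      (hVd x).mul (hb x).hasDerivAt
    convert h using 1
    simp only [hgdef, hh2def]
    ring
  -- bound on b over the interval
  have hbbd : ∀ x ∈ uIcc (0:ℝ) p, b x ≤ b p := by
    intro x hx
    rcases le_total 0 p with hp | hp
    · rw [uIcc_of_le hp] at hx
      exact hbmono (mem_Ici.2 hx.1) (mem_Ici.2 hp) hx.2
    · rw [uIcc_of_ge hp] at hx
      have h1 : b x = b (-x) := (hbeven x).symm
      have h2 : b (-p) = b p := hbeven p
      rw [h1, ← h2]
      exact hbmono (mem_Ici.2 (by linarith [hx.2])) (mem_Ici.2 (by linarith)) (by linarith [hx.1])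
  -- integrability of the derivative of V
  have hv'int : IntervalIntegrable (fun x => x * deriv φ x) volume 0 p := by
    rcases le_total 0 p with hp | hp
    · apply intervalIntegral.intervalIntegrable_deriv_of_nonneg
        hVdiff.continuous.continuousOn (fun x _ => hVd x)
      intro x hx
      rw [min_eq_left hp, max_eq_right hp] at hx
      exact mul_nonneg hx.1.le (hφ' x).le
    · have key : IntervalIntegrable (fun x => -(x * deriv φ x)) volume p 0 := by
        apply intervalIntegral.intervalIntegrable_deriv_of_nonneg
          (g := fun u => -V u) (hVdiff.neg).continuous.continuousOn
          (fun x _ => (hVd x).neg)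
        intro x hx
        rw [min_eq_left hp, max_eq_right hp] at hx
        simp only [neg_nonneg]
        exact mul_nonpos_of_nonpos_of_nonneg hx.2.le (hφ' x).le
      have heq : (fun x : ℝ => x * deriv φ x) = -(fun x => -(x * deriv φ x)) := by
        funext x; simp
      rw [heq]
      exact key.symm.neg
  -- integrability of g
  have hgint : IntervalIntegrable g volume 0 p := by
    apply IntervalIntegrable.mono_fun ((hv'int.abs).mul_const (b p))
    · exact (((measurable_deriv φ).mul measurable_id).mul
        hb.continuous.measurable).aestronglyMeasurable
    · apply ae_restrict_of_forall_mem measurableSet_uIoc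
      intro x hx
      have hx' : x ∈ uIcc (0:ℝ) p := uIoc_subset_uIcc hx
      simp only [hgdef, Real.norm_eq_abs]
      have e1 : |deriv φ x * x * b x| = |deriv φ x| * |x| * b x := by
        rw [abs_mul, abs_mul, abs_of_nonneg (hbnn x)]
      have e2 : |(|x * deriv φ x| * b p)| = |deriv φ x| * |x| * b p := by
        rw [abs_mul, abs_abs, abs_of_nonneg (hbnn p), abs_mul, mul_comm |x| _]
      rw [e1, e2]
      exact mul_le_mul_of_nonneg_left (hbbd x hx') (mul_nonneg (abs_nonneg _) (abs_nonneg _))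
  -- integrability of g + h2 (the derivative of V·b)
  have hwint : IntervalIntegrable (fun x => g x + h2 x) volume 0 p := by
    rcases le_total 0 p with hp | hp
    · apply intervalIntegral.intervalIntegrable_deriv_of_nonneg
        (hVdiff.continuous.mul hb.continuous).continuousOn (fun x _ => hWd x)
      intro x hx
      rw [min_eq_left hp, max_eq_right hp] at hx
      apply add_nonneg
      · simp only [hgdef]
        exact mul_nonneg (mul_nonneg (hφ' x).le hx.1.le) (hbnn x)
      · simp only [hh2def]; exact mul_nonneg (hVnn x) (hb' x hx.1.le)
    · have key : IntervalIntegrable (fun x => -(g x + h2 x)) volume p 0 := by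
        apply intervalIntegral.intervalIntegrable_deriv_of_nonneg
          (g := fun u => -(V u * b u))
          ((hVdiff.continuous.mul hb.continuous).neg).continuousOn
          (fun x _ => (hWd x).neg)
        intro x hx
        rw [min_eq_left hp, max_eq_right hp] at hx
        simp only [neg_nonneg]
        apply add_nonpos
        · simp only [hgdef]
          exact mul_nonpos_of_nonpos_of_nonneg
            (mul_nonpos_of_nonneg_of_nonpos (hφ' x).le hx.2.le) (hbnn x)
        · simp only [hh2def]
          exact mul_nonpos_of_nonneg_of_nonpos (hVnn x) (hb'neg x hx.2.le)
      have heq : (fun x : ℝ => g x + h2 x) = -(fun x => -(g x + h2 x)) := by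
        funext x; simp
      rw [heq]
      exact key.symm.neg
  have hh2int : IntervalIntegrable h2 volume 0 p := by
    have heq : h2 = fun x => (g x + h2 x) - g x := by funext x; ring
    rw [heq]
    exact hwint.sub hgint
  -- FTC
  have hFTC : ∫ x in (0:ℝ)..p, (g x + h2 x) = V p * b p := by
    rw [intervalIntegral.integral_eq_sub_of_hasDerivAt (fun x _ => hWd x) hwint]
    simp [hV0]
  have hsplit : ∫ x in (0:ℝ)..p, (g x + h2 x)
      = (∫ x in (0:ℝ)..p, g x) + ∫ x in (0:ℝ)..p, h2 x :=
    intervalIntegral.integral_add hgint hh2int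
  have hΨeq : Ψ p = ∫ x in (0:ℝ)..p, h2 x := by
    have h1 := hΨ p
    have hVp : V p * b p = φ p * p * b p - Φ p * b p := by rw [hV]; ring
    have h3 : (∫ τ in (0:ℝ)..p, deriv φ τ * τ * b τ) = ∫ x in (0:ℝ)..p, g x := rfl
    rw [h1, h3]
    linarith [hFTC, hsplit]
  -- sign lemma
  have key : ∀ f : ℝ → ℝ, (0 ≤ p → ∀ x ∈ Icc (0:ℝ) p, 0 ≤ f x) →
      (p ≤ 0 → ∀ x ∈ Icc p (0:ℝ), f x ≤ 0) → 0 ≤ ∫ x in (0:ℝ)..p, f x := by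
    intro f hpos hneg
    rcases le_total 0 p with hp | hp
    · exact intervalIntegral.integral_nonneg hp (hpos hp)
    · rw [intervalIntegral.integral_symm]
      have : 0 ≤ ∫ x in p..(0:ℝ), -f x := by
        apply intervalIntegral.integral_nonneg hp
        intro x hx
        simpa using hneg hp x hx
      rw [intervalIntegral.integral_neg] at this
      linarith
  have hgpos : 0 ≤ ∫ x in (0:ℝ)..p, g x := by
    apply key
    · intro hp x hx
      simp only [hgdef]
      exact mul_nonneg (mul_nonneg (hφ' x).le hx.1) (hbnn x)
    · intro hp x hx
      simp only [hgdef]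
      exact mul_nonpos_of_nonpos_of_nonneg
        (mul_nonpos_of_nonneg_of_nonpos (hφ' x).le hx.2) (hbnn x)
  have hh2pos : 0 ≤ ∫ x in (0:ℝ)..p, h2 x := by
    apply key
    · intro hp x hx
      simp only [hh2def]
      exact mul_nonneg (hVnn x) (hb' x hx.1)
    · intro hp x hx
      simp only [hh2def]
      exact mul_nonpos_of_nonneg_of_nonpos (hVnn x) (hb'neg x hx.2)
  refine ⟨hΨeq, ?_, ?_⟩
  · rw [hΨeq]; exact hh2pos
  · rw [hΨeq]
    linarith [hFTC, hsplit]
end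

section
/- Let R > 0, 0 < δ < 1, 0 < c_φ ≤ C_φ, 0 < c_μ ≤ C_μ. Let φ : ℝ → ℝ be differentiable with c_φ·max{1,|τ|}^{−1−δ} ≤ φ'(τ) ≤ C_φ for all τ, and let μ : ℝ → ℝ be continuous with c_μ ≤ μ(τ) ≤ C_μ for all τ. Define M(p) = ∫₀^p μ(τ)dτ and V_{R,M}(p) = ∫₀^p φ'(τ)M(τ)dτ + ∫₀^p 1_{{|τ|>R}}·M(τ)dτ. Then with c_{R,μ} := (c_μ/2)·min{1, c_φ·max{1,R}^{−1−δ}} and C_{R,μ} := (C_μ/2)·(C_φ + 1), one has c_{R,μ}·p² ≤ V_{R,M}(p) ≤ C_{R,μ}·p² for every p ∈ ℝ. -/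
/-- Quadratic two-sided bound for the potential V_{R,M}(p) arising when the
cut-off mass balance equation is tested with v = M(p). -/
theorem stmt8 (R δ cφ Cφ cμ Cμ : ℝ) (hR : 0 < R) (hδ1 : 0 < δ) (hδ2 : δ < 1)
    (hcφ : 0 < cφ) (hcC : cφ ≤ Cφ) (hcμ : 0 < cμ) (hμC : cμ ≤ Cμ)
    (φ : ℝ → ℝ) (hφ : Differentiable ℝ φ)
    (hφ' : ∀ τ : ℝ, cφ * (max 1 |τ|) ^ (-(1 + δ)) ≤ deriv φ τ ∧ deriv φ τ ≤ Cφ)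
    (μ : ℝ → ℝ) (hμ : Continuous μ) (hμb : ∀ τ, cμ ≤ μ τ ∧ μ τ ≤ Cμ)
    (M VRM : ℝ → ℝ)
    (hM : ∀ p, M p = ∫ τ in (0:ℝ)..p, μ τ)
    (hVRM : ∀ p, VRM p = (∫ τ in (0:ℝ)..p, deriv φ τ * M τ)
        + ∫ τ in (0:ℝ)..p, Set.indicator {τ : ℝ | R < |τ|} M τ) :
    ∀ p : ℝ,
      (cμ / 2) * min 1 (cφ * (max 1 R) ^ (-(1 + δ))) * p^2 ≤ VRM p ∧
      VRM p ≤ (Cμ / 2) * (Cφ + 1) * p^2 := by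
  set cs : ℝ := min 1 (cφ * (max 1 R) ^ (-(1 + δ))) with hcs_def
  set S : Set ℝ := {τ : ℝ | R < |τ|} with hS_def
  have hSmeas : MeasurableSet S := by
    have : IsOpen S := isOpen_lt continuous_const continuous_abs
    exact this.measurableSet
  have hcs_pos : 0 < cs := by
    apply lt_min one_pos
    exact mul_pos hcφ (Real.rpow_pos_of_pos (lt_of_lt_of_le one_pos (le_max_left 1 R)) _)
  have hcs_le_one : cs ≤ 1 := min_le_left _ _
  -- deriv bounds
  have hderiv_pos : ∀ τ, 0 < deriv φ τ := fun τ =>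
    lt_of_lt_of_le (mul_pos hcφ (Real.rpow_pos_of_pos
      (lt_of_lt_of_le one_pos (le_max_left 1 |τ|)) _)) (hφ' τ).1
  have hCφ_pos : 0 < Cφ := lt_of_lt_of_le hcφ hcC
  -- weight bounds
  have hw_low : ∀ τ, cs ≤ deriv φ τ + S.indicator (fun _ => (1:ℝ)) τ := by
    intro τ
    by_cases h : τ ∈ S
    · rw [Set.indicator_of_mem h]
      have := (hderiv_pos τ).le
      calc cs ≤ 1 := hcs_le_one
        _ ≤ deriv φ τ + 1 := by linarith
    · rw [Set.indicator_of_notMem h]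
      simp only [hS_def, Set.mem_setOf_eq, not_lt] at h
      have h1 : max 1 |τ| ≤ max 1 R := max_le_max le_rfl h
      have h2 : (max 1 R : ℝ) ^ (-(1 + δ)) ≤ (max 1 |τ|) ^ (-(1 + δ)) :=
        Real.rpow_le_rpow_of_nonpos (lt_of_lt_of_le one_pos (le_max_left 1 |τ|)) h1
          (by linarith)
      have h3 : cφ * (max 1 R) ^ (-(1 + δ)) ≤ cφ * (max 1 |τ|) ^ (-(1 + δ)) :=
        mul_le_mul_of_nonneg_left h2 hcφ.le
      have := (hφ' τ).1
      simp only [add_zero]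
      exact le_trans (min_le_right _ _) (le_trans h3 this)
  have hw_high : ∀ τ, deriv φ τ + S.indicator (fun _ => (1:ℝ)) τ ≤ Cφ + 1 := by
    intro τ
    have h1 := (hφ' τ).2
    have h2 : S.indicator (fun _ => (1:ℝ)) τ ≤ 1 := by
      by_cases h : τ ∈ S
      · rw [Set.indicator_of_mem h]
      · rw [Set.indicator_of_notMem h]; norm_num
    linarith
  have hw_nonneg : ∀ τ, 0 ≤ S.indicator (fun _ => (1:ℝ)) τ := fun τ =>
    Set.indicator_nonneg (fun _ _ => zero_le_one) τ
  -- M continuity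
  have hMcont : Continuous M := by
    have : M = fun p => ∫ τ in (0:ℝ)..p, μ τ := funext hM
    rw [this]
    exact intervalIntegral.continuous_primitive (fun a b => hμ.intervalIntegrable a b) 0
  -- M bounds
  have hM_nonneg : ∀ τ : ℝ, 0 ≤ τ → cμ * τ ≤ M τ ∧ M τ ≤ Cμ * τ := by
    intro τ hτ
    rw [hM τ]
    constructor
    · have := intervalIntegral.integral_mono_on (μ := MeasureTheory.volume) hτ (intervalIntegrable_const (c := cμ))
        (hμ.intervalIntegrable 0 τ) (fun x _ => (hμb x).1)
      simpa [mul_comm] using this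
    · have := intervalIntegral.integral_mono_on (μ := MeasureTheory.volume) hτ (hμ.intervalIntegrable 0 τ)
        (intervalIntegrable_const (c := Cμ)) (fun x _ => (hμb x).2)
      simpa [mul_comm] using this
  have hM_nonpos : ∀ τ : ℝ, τ ≤ 0 → Cμ * τ ≤ M τ ∧ M τ ≤ cμ * τ := by
    intro τ hτ
    have hsym : M τ = -∫ t in τ..(0:ℝ), μ t := by
      rw [hM τ, intervalIntegral.integral_symm]
    constructor
    · have := intervalIntegral.integral_mono_on (μ := MeasureTheory.volume) hτ (hμ.intervalIntegrable τ 0)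
        (intervalIntegrable_const (c := Cμ)) (fun x _ => (hμb x).2)
      simp only [intervalIntegral.integral_const, smul_eq_mul] at this
      rw [hsym]; nlinarith [this]
    · have := intervalIntegral.integral_mono_on (μ := MeasureTheory.volume) hτ (intervalIntegrable_const (c := cμ))
        (hμ.intervalIntegrable τ 0) (fun x _ => (hμb x).1)
      simp only [intervalIntegral.integral_const, smul_eq_mul] at this
      rw [hsym]; nlinarith [this]
  -- define combined integrand
  set f : ℝ → ℝ := fun τ => (deriv φ τ + S.indicator (fun _ => (1:ℝ)) τ) * M τ with hf_def
  have hf_eq : ∀ τ, f τ = deriv φ τ * M τ + S.indicator M τ := by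
    intro τ
    by_cases h : τ ∈ S
    · simp [hf_def, Set.indicator_of_mem h, add_mul]
    · simp [hf_def, Set.indicator_of_notMem h]
  -- integrability
  have hint1 : ∀ a b : ℝ, IntervalIntegrable (fun τ => deriv φ τ * M τ) MeasureTheory.volume a b := by
    intro a b
    rw [intervalIntegrable_iff]
    apply MeasureTheory.Integrable.bdd_mul (c := Cφ)
    · exact (hMcont.intervalIntegrable a b).def'
    · exact (measurable_deriv φ).aestronglyMeasurable
    · exact Filter.Eventually.of_forall (fun x => by
        rw [Real.norm_eq_abs, abs_of_pos (hderiv_pos x)]; exact (hφ' x).2)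
  have hint2 : ∀ a b : ℝ, IntervalIntegrable (S.indicator M) MeasureTheory.volume a b := by
    intro a b
    rw [intervalIntegrable_iff]
    exact ((hMcont.intervalIntegrable a b).def').indicator hSmeas
  have hintf : ∀ a b : ℝ, IntervalIntegrable f MeasureTheory.volume a b := by
    intro a b
    have := (hint1 a b).add (hint2 a b)
    apply this.congr
    intro x _
    exact (hf_eq x).symm
  have hVRM' : ∀ p, VRM p = ∫ τ in (0:ℝ)..p, f τ := by
    intro p
    rw [hVRM p, ← intervalIntegral.integral_add ((hint1 0 p)) ((hint2 0 p))]
    apply intervalIntegral.integral_congr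
    intro x _
    exact (hf_eq x).symm
  have hlin_int : ∀ (c : ℝ) (a b : ℝ), IntervalIntegrable (fun τ => c * τ) MeasureTheory.volume a b :=
    fun c a b => (continuous_const.mul continuous_id).intervalIntegrable a b
  have hlin_val : ∀ (c : ℝ) (a b : ℝ), (∫ τ in a..b, c * τ) = c * (b^2 - a^2) / 2 := by
    intro c a b
    rw [intervalIntegral.integral_const_mul]
    simp [integral_id]
    ring
  -- pointwise bounds
  have hpt_pos : ∀ τ : ℝ, 0 ≤ τ → cs * cμ * τ ≤ f τ ∧ f τ ≤ (Cφ + 1) * Cμ * τ := by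
    intro τ hτ
    obtain ⟨h1, h2⟩ := hM_nonneg τ hτ
    have hw1 := hw_low τ
    have hw2 := hw_high τ
    have hM0 : 0 ≤ M τ := le_trans (by positivity) h1
    constructor
    · calc cs * cμ * τ = cs * (cμ * τ) := by ring
        _ ≤ cs * M τ := mul_le_mul_of_nonneg_left h1 hcs_pos.le
        _ ≤ f τ := mul_le_mul_of_nonneg_right hw1 hM0
    · calc f τ ≤ (Cφ + 1) * M τ := mul_le_mul_of_nonneg_right hw2 hM0
        _ ≤ (Cφ + 1) * (Cμ * τ) := mul_le_mul_of_nonneg_left h2 (by linarith)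
        _ = (Cφ + 1) * Cμ * τ := by ring
  have hpt_neg : ∀ τ : ℝ, τ ≤ 0 → (Cφ + 1) * Cμ * τ ≤ f τ ∧ f τ ≤ cs * cμ * τ := by
    intro τ hτ
    obtain ⟨h1, h2⟩ := hM_nonpos τ hτ
    have hw1 := hw_low τ
    have hw2 := hw_high τ
    have hM0 : M τ ≤ 0 := le_trans h2 (by nlinarith)
    constructor
    · calc (Cφ + 1) * Cμ * τ = (Cφ + 1) * (Cμ * τ) := by ring
        _ ≤ (Cφ + 1) * M τ := mul_le_mul_of_nonneg_left h1 (by linarith)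
        _ ≤ f τ := mul_le_mul_of_nonpos_right hw2 hM0
    · calc f τ ≤ cs * M τ := mul_le_mul_of_nonpos_right hw1 hM0
        _ ≤ cs * (cμ * τ) := mul_le_mul_of_nonneg_left h2 hcs_pos.le
        _ = cs * cμ * τ := by ring
  intro p
  rw [hVRM' p]
  rcases le_or_gt 0 p with hp | hp
  · constructor
    · have := intervalIntegral.integral_mono_on hp (hlin_int (cs * cμ) 0 p) (hintf 0 p)
        (fun x hx => (hpt_pos x hx.1).1)
      rw [hlin_val] at this
      nlinarith [this]
    · have := intervalIntegral.integral_mono_on hp (hintf 0 p) (hlin_int ((Cφ+1) * Cμ) 0 p)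
        (fun x hx => (hpt_pos x hx.1).2)
      rw [hlin_val] at this
      nlinarith [this]
  · have hsym : (∫ τ in (0:ℝ)..p, f τ) = -∫ τ in p..(0:ℝ), f τ :=
      intervalIntegral.integral_symm p 0
    constructor
    · have := intervalIntegral.integral_mono_on hp.le (hintf p 0) (hlin_int (cs * cμ) p 0)
        (fun x hx => (hpt_neg x hx.2).2)
      rw [hlin_val] at this
      rw [hsym]
      nlinarith [this]
    · have := intervalIntegral.integral_mono_on hp.le (hlin_int ((Cφ+1) * Cμ) p 0) (hintf p 0)
        (fun x hx => (hpt_neg x hx.2).1)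
      rw [hlin_val] at this
      rw [hsym]
      nlinarith [this]
end
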